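/- arXiv:1404.0818 — 2 statements merged into one kernel-verified Lean document; each statement's English description precedes it below -/
import Mathlib

section
/- Let k be a positive integer and G a finite graph. If the treewidth of G is less than k, then the treewidth of the k-improved graph G^{(k)} equals the treewidth of G. -/
/-!
Common definitions: separations, stable separations, the improved graph,
external neighbourhoods, connected components, clique separations, and
rooted tree decompositions together with treewidth.
-/

section Defs

variable {V : Type} [Fintype V] [DecidableEq V]

/-- A separation of a graph `G`: a pair `(A, B)` covering the vertex set with no
edge between `A \ B` and `B \ A`.  Its order is `(A ∩ B).card`. -/
def IsSeparation (G : SimpleGraph V) (A B : Finset V) : Prop :=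
  A ∪ B = Finset.univ ∧ ∀ a ∈ A, a ∉ B → ∀ b ∈ B, b ∉ A → ¬G.Adj a b

/-- An `X`–`Y` separation: a separation `(A, B)` with `X ⊆ A` and `Y ⊆ B`. -/
def IsSepFor (G : SimpleGraph V) (X Y A B : Finset V) : Prop :=
  IsSeparation G A B ∧ X ⊆ A ∧ Y ⊆ B

/-- An `X`–`Y` separation of minimum possible order. -/
def IsMinSepFor (G : SimpleGraph V) (X Y A B : Finset V) : Prop :=
  IsSepFor G X Y A B ∧ ∀ A' B', IsSepFor G X Y A' B' → (A ∩ B).card ≤ (A' ∩ B').card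

/-- A separation `(A, B)` is `S`-stable if it is a minimum-order `S_L`–`S_R`
separation for some partition `(S_L, S_R)` of `S`. -/
def IsStable (G : SimpleGraph V) (S A B : Finset V) : Prop :=
  ∃ SL SR, Disjoint SL SR ∧ SL ∪ SR = S ∧ IsMinSepFor G SL SR A B

/-- `conn_G(x, y) < k`: there is a separation of order `< k` with `x ∈ A ∖ B` and
`y ∈ B ∖ A`.  (For adjacent `x, y` no such separation exists, i.e. `conn = +∞`.) -/
def ConnLt (G : SimpleGraph V) (x y : V) (k : ℕ) : Prop :=
  ∃ A B, IsSeparation G A B ∧ x ∈ A ∧ x ∉ B ∧ y ∈ B ∧ y ∉ A ∧ (A ∩ B).card < k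

/-- A graph is `k`-complemented when `conn(x,y) ≥ k` implies that `x` and `y` are
adjacent; equivalently, any two distinct nonadjacent vertices are separated by a
separation of order `< k`. -/
def KComplemented (G : SimpleGraph V) (k : ℕ) : Prop :=
  ∀ x y, x ≠ y → ¬G.Adj x y → ConnLt G x y k

lemma IsSeparation.symm2 {G : SimpleGraph V} {A B : Finset V} (h : IsSeparation G A B) :
    IsSeparation G B A :=
  ⟨by rw [Finset.union_comm]; exact h.1,
   fun a ha ha' b hb hb' hadj => h.2 b hb hb' a ha ha' hadj.symm⟩

/-- The `k`-improved graph `G^{(k)}`: same vertices, and `xy` is an edge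
iff `conn_G(x,y) ≥ k` (in particular all edges of `G` are kept). -/
def improvedGraph (G : SimpleGraph V) (k : ℕ) : SimpleGraph V where
  Adj x y := x ≠ y ∧ ¬ConnLt G x y k
  symm := by
    constructor
    rintro x y ⟨hxy, h⟩
    refine ⟨hxy.symm, ?_⟩
    rintro ⟨A, B, hsep, hy, hy', hx, hx', hc⟩
    exact h ⟨B, A, hsep.symm2, hx, hx', hy, hy', by rwa [Finset.inter_comm]⟩
  loopless := ⟨fun x h => h.1 rfl⟩

/-- The external neighbourhood `N_G(Z)`: vertices outside `Z` with a neighbour in `Z`. -/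
def extNbhd (G : SimpleGraph V) (Z : Set V) : Set V :=
  {v | v ∉ Z ∧ ∃ z ∈ Z, G.Adj v z}

/-- `Z` is the vertex set of a connected component of `G - X`: it is disjoint from `X`,
induces a connected subgraph, and all its neighbours outside itself lie in `X`. -/
def IsCompAway (G : SimpleGraph V) (X Z : Set V) : Prop :=
  Disjoint Z X ∧ (G.induce Z).Connected ∧
    ∀ ⦃v z : V⦄, z ∈ Z → G.Adj v z → v ∉ Z → v ∈ X

/-- The subgraph of `G` induced on `W` admits no clique separation: there is no
separation `(A, B)` of `G[W]` with `A ∖ B ≠ ∅`, `B ∖ A ≠ ∅` and `A ∩ B` a clique. -/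
def CliqueSepFreeOn (G : SimpleGraph V) (W : Finset V) : Prop :=
  ¬∃ A B : Finset V, A ∪ B = W ∧
      (∀ a ∈ A, a ∉ B → ∀ b ∈ B, b ∉ A → ¬G.Adj a b) ∧
      (A \ B).Nonempty ∧ (B \ A).Nonempty ∧ G.IsClique (↑(A ∩ B) : Set V)

/-- A rooted tree decomposition of the subgraph of `G` induced on `W`.
The rooted tree is given by a finite node type with a parent function
(every node reaches the root by iterating `parent`);
for every vertex of `W` the nodes whose bags contain it form a nonempty connected
subtree, and every edge of `G[W]` lies inside some bag. -/
structure RTDOn (V : Type) [Fintype V] [DecidableEq V] (G : SimpleGraph V) (W : Finset V) where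
  ι : Type
  instFintype : Fintype ι
  instDecEq : DecidableEq ι
  root : ι
  parent : ι → ι
  parent_root : parent root = root
  reaches_root : ∀ t, ∃ n, parent^[n] t = root
  bag : ι → Finset V
  bag_subset : ∀ t, bag t ⊆ W
  bags_connected : ∀ v ∈ W,
    ((SimpleGraph.fromRel fun s t => parent s = t).induce {t | v ∈ bag t}).Connected
  edge_in_bag : ∀ u ∈ W, ∀ v ∈ W, G.Adj u v → ∃ t, u ∈ bag t ∧ v ∈ bag t

/-- A rooted tree decomposition of `G`. -/
abbrev RTD (V : Type) [Fintype V] [DecidableEq V] (G : SimpleGraph V) : Type 1 :=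
  RTDOn V G Finset.univ

namespace RTDOn

variable {G : SimpleGraph V} {W : Finset V}

instance (D : RTDOn V G W) : Fintype D.ι := D.instFintype
instance (D : RTDOn V G W) : DecidableEq D.ι := D.instDecEq

/-- The decomposition has width at most `w`, i.e. all bags have size at most `w + 1`. -/
def widthLe (D : RTDOn V G W) (w : ℕ) : Prop := ∀ t, (D.bag t).card ≤ w + 1

/-- The decomposition has adhesion width at most `ℓ`: for every tree edge
`(t, parent t)` the intersection of the two bags has size at most `ℓ`. -/
def adhesionLe (D : RTDOn V G W) (l : ℕ) : Prop :=
  ∀ t, t ≠ D.root → (D.bag t ∩ D.bag (D.parent t)).card ≤ l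

/-- A family of potential bags captures a decomposition if every bag belongs to it. -/
def captures (D : RTDOn V G W) (ℬ : Finset (Finset V)) : Prop := ∀ t, D.bag t ∈ ℬ

/-- `γ(t)`: union of the bags at all descendants of `t`. -/
def gammaSet (D : RTDOn V G W) (t : D.ι) : Set V :=
  {v | ∃ s, (∃ n, D.parent^[n] s = t) ∧ v ∈ D.bag s}

/-- `σ(t)`: the adhesion of `t` with its parent (empty at the root). -/
def sigmaBag (D : RTDOn V G W) (t : D.ι) : Finset V :=
  if t = D.root then ∅ else D.bag t ∩ D.bag (D.parent t)

/-- `α(t) = γ(t) ∖ σ(t)`. -/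
def alphaSet (D : RTDOn V G W) (t : D.ι) : Set V := D.gammaSet t \ ↑(D.sigmaBag t)

end RTDOn

/-- A rooted tree decomposition is connectivity-sensitive when every `G[α(t)]`
is connected and `σ(t) = N_G(α(t))`. -/
def IsCSDecomp {G : SimpleGraph V} (D : RTD V G) : Prop :=
  ∀ t, (G.induce (D.alphaSet t)).Connected ∧ extNbhd G (D.alphaSet t) = ↑(D.sigmaBag t)

/-- The treewidth of `G`: the least `w` such that `G` has a (rooted) tree
decomposition of width at most `w`. -/
noncomputable def treewidth (G : SimpleGraph V) : ℕ :=
  sInf {w : ℕ | ∃ D : RTD V G, D.widthLe w}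

/-- `ℬ^{≤q}`: all sets of size at most `q` contained in some member of `ℬ`. -/
def belowFam (ℬ : Finset (Finset V)) (q : ℕ) : Finset (Finset V) :=
  Finset.univ.filter fun X => X.card ≤ q ∧ ∃ B ∈ ℬ, X ⊆ B

end Defs

section Aux

variable {V : Type} [Fintype V] [DecidableEq V] {G : SimpleGraph V}

namespace RTDOn

variable {W : Finset V}

/-- `s` is a descendant of `t` (including `t` itself). -/
def Desc (D : RTDOn V G W) (s t : D.ι) : Prop := ∃ n, D.parent^[n] s = t

lemma desc_refl (D : RTDOn V G W) (t : D.ι) : D.Desc t t := ⟨0, rfl⟩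

lemma desc_trans {D : RTDOn V G W} {s t u : D.ι} (h1 : D.Desc s t) (h2 : D.Desc t u) :
    D.Desc s u := by
  obtain ⟨n, hn⟩ := h1; obtain ⟨m, hm⟩ := h2
  exact ⟨m + n, by rw [Function.iterate_add_apply, hn, hm]⟩

lemma desc_parent_of_ne {D : RTDOn V G W} {s t : D.ι} (h : D.Desc s t) (hst : s ≠ t) :
    D.Desc (D.parent s) t := by
  obtain ⟨n, hn⟩ := h
  cases n with
  | zero => exact absurd hn hst
  | succ m => exact ⟨m, by rwa [Function.iterate_succ_apply] at hn⟩

lemma desc_to_parent (D : RTDOn V G W) (s : D.ι) : D.Desc s (D.parent s) := ⟨1, rfl⟩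

/-- The depth of a node: number of parent steps to reach the root. -/
noncomputable def depth (D : RTDOn V G W) (t : D.ι) : ℕ := Nat.find (D.reaches_root t)

lemma depth_spec (D : RTDOn V G W) (t : D.ι) : D.parent^[D.depth t] t = D.root :=
  Nat.find_spec (D.reaches_root t)

lemma depth_parent_lt {D : RTDOn V G W} {t : D.ι} (h : t ≠ D.root) :
    D.depth (D.parent t) < D.depth t := by
  have h0 : D.depth t ≠ 0 := by
    intro h0
    have := D.depth_spec t
    rw [h0] at this
    exact h this
  obtain ⟨m, hm⟩ := Nat.exists_eq_succ_of_ne_zero h0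
  have hs := D.depth_spec t
  rw [hm, Function.iterate_succ_apply] at hs
  have : D.depth (D.parent t) ≤ m := Nat.find_le hs
  omega

lemma depth_parent_le (D : RTDOn V G W) (t : D.ι) : D.depth (D.parent t) ≤ D.depth t := by
  by_cases h : t = D.root
  · rw [h, D.parent_root]
  · exact le_of_lt (depth_parent_lt h)

lemma depth_iterate_le (D : RTDOn V G W) (n : ℕ) (t : D.ι) :
    D.depth (D.parent^[n] t) ≤ D.depth t := by
  induction n generalizing t with
  | zero => exact le_refl _
  | succ m ih =>
      calc D.depth (D.parent^[m+1] t) = D.depth (D.parent^[m] (D.parent t)) := by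
            rw [Function.iterate_succ_apply]
        _ ≤ D.depth (D.parent t) := ih (D.parent t)
        _ ≤ D.depth t := D.depth_parent_le t

lemma depth_lt_of_desc {D : RTDOn V G W} {s t : D.ι} (h : D.Desc s t) (hne : s ≠ t) :
    D.depth t < D.depth s := by
  by_cases hr : s = D.root
  · obtain ⟨n, hn⟩ := h
    subst hr
    rw [Function.iterate_fixed D.parent_root] at hn
    exact absurd hn hne
  · have h' := desc_parent_of_ne h hne
    obtain ⟨n, hn⟩ := h'
    calc D.depth t = D.depth (D.parent^[n] (D.parent s)) := by rw [hn]
      _ ≤ D.depth (D.parent s) := D.depth_iterate_le n _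
      _ < D.depth s := depth_parent_lt hr

lemma desc_antisymm {D : RTDOn V G W} {s t : D.ι} (h1 : D.Desc s t) (h2 : D.Desc t s) :
    s = t := by
  by_contra hne
  have a := depth_lt_of_desc h1 hne
  have b := depth_lt_of_desc h2 (Ne.symm hne)
  omega

/-- The tree graph associated with a decomposition. -/
abbrev treeGraph (D : RTDOn V G W) : SimpleGraph D.ι :=
  SimpleGraph.fromRel fun s t => D.parent s = t

lemma cross_walk (D : RTDOn V G W) (T : Set D.ι) (t0 : D.ι) :
    ∀ {p q : ↥T} (_ : ((D.treeGraph).induce T).Walk p q),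
      D.Desc p.1 t0 → ¬ D.Desc q.1 t0 → t0 ∈ T ∧ D.parent t0 ∈ T := by
  intro p q w
  induction w with
  | nil => intro h1 h2; exact absurd h1 h2
  | @cons u v r h w ih =>
    intro hp hq
    by_cases hv : D.Desc v.1 t0
    · exact ih hv hq
    · have h' : (↑u : D.ι) ≠ ↑v ∧ (D.parent ↑u = ↑v ∨ D.parent ↑v = ↑u) := by
        simpa [SimpleGraph.fromRel_adj] using h
      rcases h'.2 with h2 | h2
      · by_cases he : (↑u : D.ι) = t0
        · refine ⟨he ▸ u.2, ?_⟩
          rw [← he, h2]; exact v.2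
        · exact absurd (h2 ▸ desc_parent_of_ne hp he) hv
      · have hvu : D.Desc (↑v : D.ι) ↑u := ⟨1, h2⟩
        exact absurd (desc_trans hvu hp) hv

lemma desc_of_walk (D : RTDOn V G W) (T : Set D.ι) (r : D.ι)
    (htop : D.parent r ∉ T ∨ r = D.root) :
    ∀ {p q : ↥T} (_ : ((D.treeGraph).induce T).Walk p q),
      D.Desc p.1 r → D.Desc q.1 r := by
  intro p q w
  induction w with
  | nil => exact fun h => h
  | @cons u v r' h w ih =>
    intro hp
    refine ih ?_
    have h' : (↑u : D.ι) ≠ ↑v ∧ (D.parent ↑u = ↑v ∨ D.parent ↑v = ↑u) := by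
      simpa [SimpleGraph.fromRel_adj] using h
    rcases h'.2 with h2 | h2
    · by_cases he : (↑u : D.ι) = r
      · rcases htop with ht | ht
        · exact absurd (show D.parent r ∈ T by rw [← he, h2]; exact v.2) ht
        · exact absurd (by rw [← h2, he, ht, D.parent_root]) h'.1
      · exact h2 ▸ desc_parent_of_ne hp he
    · have hvu : D.Desc (↑v : D.ι) ↑u := ⟨1, h2⟩
      exact desc_trans hvu hp

end RTDOn

lemma exists_mem_bag (D : RTD V G) (v : V) : ∃ t, v ∈ D.bag t := by
  have h := (D.bags_connected v (Finset.mem_univ v)).nonempty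
  obtain ⟨⟨t, ht⟩⟩ := h
  exact ⟨t, ht⟩

lemma ConnLt.symm {x y : V} {k : ℕ} (h : ConnLt G x y k) : ConnLt G y x k := by
  obtain ⟨A, B, hsep, h1, h2, h3, h4, h5⟩ := h
  exact ⟨B, A, hsep.symm2, h3, h4, h1, h2, by rwa [Finset.inter_comm]⟩

/-- Core separation construction. -/
lemma core_sep (D : RTD V G) (k : ℕ) (hbag : ∀ t, (D.bag t).card ≤ k)
    (x y : V) (t0 : D.ι)
    (hx : x ∈ D.bag t0) (hxp : x ∉ D.bag (D.parent t0))
    (hTx : ∀ s, x ∈ D.bag s → D.Desc s t0)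
    (hTy : ∀ s, y ∈ D.bag s → ¬ D.Desc s t0) :
    ConnLt G x y k := by
  classical
  set A : Finset V := Finset.univ.filter fun v => ∃ s, D.Desc s t0 ∧ v ∈ D.bag s with hA
  set B : Finset V := Finset.univ.filter fun v => ∃ s, ¬ D.Desc s t0 ∧ v ∈ D.bag s with hB
  have hmemA : ∀ v : V, v ∈ A ↔ ∃ s, D.Desc s t0 ∧ v ∈ D.bag s := by
    intro v; simp [hA]
  have hmemB : ∀ v : V, v ∈ B ↔ ∃ s, ¬ D.Desc s t0 ∧ v ∈ D.bag s := by
    intro v; simp [hB]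
  -- the crossing lemma application
  have hsub : A ∩ B ⊆ (D.bag t0).erase x := by
    intro v hv
    rw [Finset.mem_inter] at hv
    obtain ⟨s, hs, hvs⟩ := (hmemA v).1 hv.1
    obtain ⟨s', hs', hvs'⟩ := (hmemB v).1 hv.2
    have hconn := (D.bags_connected v (Finset.mem_univ v)).preconnected
      ⟨s, hvs⟩ ⟨s', hvs'⟩
    obtain ⟨w⟩ := hconn
    have hcr := D.cross_walk {t | v ∈ D.bag t} t0 w hs hs'
    rw [Finset.mem_erase]
    refine ⟨?_, hcr.1⟩
    rintro rfl
    exact hxp hcr.2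
  constructor
  case w => exact A
  constructor
  case w => exact B
  refine ⟨⟨?_, ?_⟩, ?_, ?_, ?_, ?_, ?_⟩
  · -- union is univ
    apply Finset.eq_univ_of_forall
    intro v
    obtain ⟨s, hvs⟩ := exists_mem_bag D v
    by_cases hd : D.Desc s t0
    · exact Finset.mem_union_left _ ((hmemA v).2 ⟨s, hd, hvs⟩)
    · exact Finset.mem_union_right _ ((hmemB v).2 ⟨s, hd, hvs⟩)
  · -- no edge across
    intro a haA haB b hbB hbA hadj
    obtain ⟨s, hs⟩ := D.edge_in_bag a (Finset.mem_univ a) b (Finset.mem_univ b) hadj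
    by_cases hd : D.Desc s t0
    · exact hbA ((hmemA b).2 ⟨s, hd, hs.2⟩)
    · exact haB ((hmemB a).2 ⟨s, hd, hs.1⟩)
  · exact (hmemA x).2 ⟨t0, D.desc_refl t0, hx⟩
  · intro hxB
    obtain ⟨s, hs, hxs⟩ := (hmemB x).1 hxB
    exact hs (hTx s hxs)
  · obtain ⟨s, hys⟩ := exists_mem_bag D y
    exact (hmemB y).2 ⟨s, hTy s hys, hys⟩
  · intro hyA
    obtain ⟨s, hs, hys⟩ := (hmemA y).1 hyA
    exact hTy s hys hs
  · calc (A ∩ B).card ≤ ((D.bag t0).erase x).card := Finset.card_le_card hsub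
      _ = (D.bag t0).card - 1 := Finset.card_erase_of_mem hx
      _ < (D.bag t0).card := Nat.sub_lt (Finset.card_pos.2 ⟨x, hx⟩) one_pos
      _ ≤ k := hbag t0

/-- Every edge of the improved graph lives in a bag of any small-width decomposition. -/
lemma improved_edge_in_bag (D : RTD V G) (k : ℕ) (hbag : ∀ t, (D.bag t).card ≤ k)
    {x y : V} (hAdj : (improvedGraph G k).Adj x y) :
    ∃ t, x ∈ D.bag t ∧ y ∈ D.bag t := by
  classical
  by_contra hnc
  push_neg at hnc
  obtain ⟨hne, hncon⟩ := hAdj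
  apply hncon
  -- pick minimal-depth nodes whose bag contains x, resp. y
  obtain ⟨sx, hsx⟩ := exists_mem_bag D x
  obtain ⟨sy, hsy⟩ := exists_mem_bag D y
  obtain ⟨rx, hrx, hrxmin⟩ := Finset.exists_min_image
    (Finset.univ.filter fun t => x ∈ D.bag t) D.depth
    ⟨sx, by simpa using hsx⟩
  obtain ⟨ry, hry, hrymin⟩ := Finset.exists_min_image
    (Finset.univ.filter fun t => y ∈ D.bag t) D.depth
    ⟨sy, by simpa using hsy⟩
  rw [Finset.mem_filter] at hrx hry
  have hrxbag : x ∈ D.bag rx := hrx.2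
  have hrybag : y ∈ D.bag ry := hry.2
  have hrxmin' : ∀ s, x ∈ D.bag s → D.depth rx ≤ D.depth s := fun s hs =>
    hrxmin s (by simpa using hs)
  have hrymin' : ∀ s, y ∈ D.bag s → D.depth ry ≤ D.depth s := fun s hs =>
    hrymin s (by simpa using hs)
  have htopx : D.parent rx ∉ {t | x ∈ D.bag t} ∨ rx = D.root := by
    by_cases hr : rx = D.root
    · exact Or.inr hr
    · left
      intro hmem
      exact absurd (hrxmin' _ hmem) (not_le.2 (RTDOn.depth_parent_lt hr))
  have htopy : D.parent ry ∉ {t | y ∈ D.bag t} ∨ ry = D.root := by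
    by_cases hr : ry = D.root
    · exact Or.inr hr
    · left
      intro hmem
      exact absurd (hrymin' _ hmem) (not_le.2 (RTDOn.depth_parent_lt hr))
  have hTxsub : ∀ s, x ∈ D.bag s → D.Desc s rx := by
    intro s hs
    obtain ⟨w⟩ := (D.bags_connected x (Finset.mem_univ x)).preconnected
      ⟨rx, hrxbag⟩ ⟨s, hs⟩
    exact D.desc_of_walk _ rx htopx w (D.desc_refl rx)
  have hTysub : ∀ s, y ∈ D.bag s → D.Desc s ry := by
    intro s hs
    obtain ⟨w⟩ := (D.bags_connected y (Finset.mem_univ y)).preconnected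
      ⟨ry, hrybag⟩ ⟨s, hs⟩
    exact D.desc_of_walk _ ry htopy w (D.desc_refl ry)
  have hrne : rx ≠ ry := by
    rintro rfl
    exact hnc rx hrxbag hrybag
  by_cases hc : D.Desc ry rx
  · -- use t0 = ry, roles of x and y swapped
    have hryroot : ry ≠ D.root := by
      rintro rfl
      exact hrne (RTDOn.desc_antisymm (D.reaches_root rx) hc)
    have hyp : y ∉ D.bag (D.parent ry) := by
      rcases htopy with ht | ht
      · exact ht
      · exact absurd ht hryroot
    have hTx' : ∀ s, x ∈ D.bag s → ¬ D.Desc s ry := by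
      intro s hs hd
      have hnrx : ¬ D.Desc rx ry := by
        intro h
        exact hrne (RTDOn.desc_antisymm h hc)
      obtain ⟨w⟩ := (D.bags_connected x (Finset.mem_univ x)).preconnected
        ⟨s, hs⟩ ⟨rx, hrxbag⟩
      have hcr := D.cross_walk {t | x ∈ D.bag t} ry w hd hnrx
      exact hnc ry hcr.1 hrybag
    exact (core_sep D k hbag y x ry hrybag hyp hTysub hTx').symm
  · -- use t0 = rx
    have hrxroot : rx ≠ D.root := by
      rintro rfl
      exact hc (D.reaches_root ry)
    have hxp : x ∉ D.bag (D.parent rx) := by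
      rcases htopx with ht | ht
      · exact ht
      · exact absurd ht hrxroot
    have hTy' : ∀ s, y ∈ D.bag s → ¬ D.Desc s rx := by
      intro s hs hd
      obtain ⟨w⟩ := (D.bags_connected y (Finset.mem_univ y)).preconnected
        ⟨s, hs⟩ ⟨ry, hrybag⟩
      have hcr := D.cross_walk {t | y ∈ D.bag t} rx w hd hc
      exact hnc rx hrxbag hcr.1
    exact core_sep D k hbag x y rx hrxbag hxp hTxsub hTy'

/-- The trivial one-node decomposition. -/
def trivialRTD (G : SimpleGraph V) : RTD V G where
  ι := Unit
  instFintype := inferInstance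
  instDecEq := inferInstance
  root := ()
  parent := id
  parent_root := rfl
  reaches_root := fun t => ⟨0, rfl⟩
  bag := fun _ => Finset.univ
  bag_subset := fun _ => Finset.Subset.refl _
  bags_connected := fun v _ => by
    haveI : Nonempty {t : Unit | v ∈ (Finset.univ : Finset V)} := ⟨⟨(), Finset.mem_univ v⟩⟩
    exact ⟨fun a b => by rw [Subsingleton.elim a b]⟩
  edge_in_bag := fun u _ v _ _ => ⟨(), Finset.mem_univ u, Finset.mem_univ v⟩

lemma treewidth_set_nonempty (G : SimpleGraph V) :
    {w : ℕ | ∃ D : RTD V G, D.widthLe w}.Nonempty :=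
  ⟨Fintype.card V, trivialRTD G, fun _ => by
    simp [trivialRTD, RTDOn.widthLe]⟩

end Aux


/-- If `tw(G) < k`, then the treewidth of `G^{(k)}` equals the treewidth
of `G`. -/
theorem stmt10 {V : Type} [Fintype V] [DecidableEq V] (k : ℕ) (hk : 0 < k)
    (G : SimpleGraph V) (htw : treewidth G < k) :
    treewidth (improvedGraph G k) = treewidth G := by
  obtain ⟨D, hD⟩ := Nat.sInf_mem (treewidth_set_nonempty G)
  have hbag : ∀ t, (D.bag t).card ≤ k := fun t => le_trans (hD t) htw
  -- D is also a decomposition of the improved graph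
  let D' : RTD V (improvedGraph G k) :=
    { ι := D.ι, instFintype := D.instFintype, instDecEq := D.instDecEq,
      root := D.root, parent := D.parent, parent_root := D.parent_root,
      reaches_root := D.reaches_root, bag := D.bag, bag_subset := D.bag_subset,
      bags_connected := D.bags_connected,
      edge_in_bag := fun u _ v _ h => improved_edge_in_bag D k hbag h }
  apply le_antisymm
  · exact Nat.sInf_le ⟨D', hD⟩
  · obtain ⟨E, hE⟩ := Nat.sInf_mem (treewidth_set_nonempty (improvedGraph G k))
    let E' : RTD V G :=
      { ι := E.ι, instFintype := E.instFintype, instDecEq := E.instDecEq,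
        root := E.root, parent := E.parent, parent_root := E.parent_root,
        reaches_root := E.reaches_root, bag := E.bag, bag_subset := E.bag_subset,
        bags_connected := E.bags_connected,
        edge_in_bag := fun u hu v hv h => E.edge_in_bag u hu v hv
          ⟨h.ne, fun ⟨A, B, hsep, hA, hA', hB, hB', _⟩ => hsep.2 u hA hA' v hB hB' h⟩ }
    exact Nat.sInf_le ⟨E', hE⟩
end

section
/- Let G be a finite graph of treewidth less than k and let S ⊆ V(G). Then there exists a separation (A,B) of G of order at most k that is 2/3-balanced for S, i.e., |(A∖B) ∩ S| ≤ (2/3)|S| and |(B∖A) ∩ S| ≤ (2/3)|S|. -/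
section TreeAux
variable {ι : Type} {p : ι → ι} {r : ι}

lemma cycle_eq_root (hr : p r = r) (hreach : ∀ t, ∃ n, p^[n] t = r)
    {t : ι} {d : ℕ} (hd : d ≠ 0) (h : p^[d] t = t) : t = r := by
  obtain ⟨N, hN⟩ := hreach t
  have hdN : p^[d * N] t = t := by
    rw [Function.iterate_mul]
    exact Function.iterate_fixed h N
  have hle : N ≤ d * N := Nat.le_mul_of_pos_left N (Nat.pos_of_ne_zero hd)
  have h1 : d * N = (d * N - N) + N := by omega
  rw [h1, Function.iterate_add_apply, hN, Function.iterate_fixed hr] at hdN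
  exact hdN.symm

lemma crossing {x y c : ι} (hsub : ∃ n, p^[n] x = c) (hns : ¬ ∃ n, p^[n] y = c)
    (he : p x = y ∨ p y = x) : x = c ∧ y = p c := by
  rcases he with he | he
  · obtain ⟨n, hn⟩ := hsub
    cases n with
    | zero => simp only [Function.iterate_zero_apply] at hn; exact ⟨hn, by rw [← hn, he]⟩
    | succ m =>
      exfalso
      exact hns ⟨m, by rw [← he, ← Function.iterate_succ_apply]; exact hn⟩
  · exfalso
    obtain ⟨n, hn⟩ := hsub
    exact hns ⟨n + 1, by rw [Function.iterate_succ_apply, he]; exact hn⟩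

lemma child_unique_aux (hr : p r = r) (hreach : ∀ t, ∃ n, p^[n] t = r)
    {t c c' s : ι} (hc : p c = t) (hc' : p c' = t) (hct' : c' ≠ t)
    {n m : ℕ} (hn : p^[n] s = c) (hm : p^[m] s = c') (hnm : n ≤ m) : c = c' := by
  have hmc : p^[m - n] c = c' := by
    rw [← hn, ← Function.iterate_add_apply, Nat.sub_add_cancel hnm, hm]
  rcases Nat.eq_zero_or_pos (m - n) with h0 | hpos
  · rw [h0] at hmc; exact hmc
  · exfalso
    obtain ⟨j, hj⟩ : ∃ j, m - n = j + 1 := ⟨m - n - 1, by omega⟩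
    rw [hj, Function.iterate_succ_apply, hc] at hmc
    -- hmc : p^[j] t = c'
    have hcyc : p^[j + 1] t = t := by
      rw [Function.iterate_succ_apply', hmc, hc']
    have htr : t = r := cycle_eq_root hr hreach (Nat.succ_ne_zero j) hcyc
    apply hct'
    rw [← hmc, htr, Function.iterate_fixed hr]

lemma child_unique (hr : p r = r) (hreach : ∀ t, ∃ n, p^[n] t = r)
    {t c c' s : ι} (hc : p c = t) (hct : c ≠ t) (hc' : p c' = t) (hct' : c' ≠ t)
    (h1 : ∃ n, p^[n] s = c) (h2 : ∃ n, p^[n] s = c') : c = c' := by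
  obtain ⟨n, hn⟩ := h1
  obtain ⟨m, hm⟩ := h2
  rcases le_total n m with h | h
  · exact child_unique_aux hr hreach hc hc' hct' hn hm h
  · exact (child_unique_aux hr hreach hc' hc hct hm hn h).symm

end TreeAux

section GraphAux
variable {V : Type} [Fintype V] [DecidableEq V] {G : SimpleGraph V}

lemma exists_bag (D : RTD V G) (v : V) : ∃ s, v ∈ D.bag s := by
  have h := D.bags_connected v (Finset.mem_univ v)
  obtain ⟨⟨s, hs⟩⟩ := h.nonempty
  exact ⟨s, hs⟩

lemma walk_cross (D : RTD V G) {v : V} {c : D.ι}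
    {a b : ↥{t : D.ι | v ∈ D.bag t}}
    (w : ((SimpleGraph.fromRel fun s t => D.parent s = t).induce {t : D.ι | v ∈ D.bag t}).Walk a b)
    (ha : ∃ n, D.parent^[n] a.1 = c) (hb : ¬ ∃ n, D.parent^[n] b.1 = c) :
    v ∈ D.bag c ∧ v ∈ D.bag (D.parent c) := by
  induction w with
  | nil => exact absurd ha hb
  | @cons a x b h w ih =>
    by_cases hx : ∃ n, D.parent^[n] x.1 = c
    · exact ih hx hb
    · have h' : a.1 ≠ x.1 ∧ (D.parent a.1 = x.1 ∨ D.parent x.1 = a.1) := by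
        simpa [SimpleGraph.fromRel_adj] using h
      obtain ⟨hac, hxc⟩ := crossing ha hx h'.2
      refine ⟨hac ▸ a.2, ?_⟩
      have := x.2
      rw [hxc] at this
      exact this

lemma key_lemma (D : RTD V G) {v : V} {c s s' : D.ι}
    (hs : v ∈ D.bag s) (hsub : ∃ n, D.parent^[n] s = c)
    (hs' : v ∈ D.bag s') (hns : ¬ ∃ n, D.parent^[n] s' = c) :
    v ∈ D.bag c ∧ v ∈ D.bag (D.parent c) := by
  have hconn := D.bags_connected v (Finset.mem_univ v)
  have hreach := hconn.preconnected ⟨s, hs⟩ ⟨s', hs'⟩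
  obtain ⟨w⟩ := hreach
  exact walk_cross D w hsub hns

def trivRTD (V : Type) [Fintype V] [DecidableEq V] (G : SimpleGraph V) : RTD V G where
  ι := Unit
  instFintype := inferInstance
  instDecEq := inferInstance
  root := ()
  parent := id
  parent_root := rfl
  reaches_root t := ⟨0, rfl⟩
  bag _ := Finset.univ
  bag_subset _ := subset_rfl
  bags_connected v _ := by
    have hne : Nonempty ↥{t : Unit | v ∈ (Finset.univ : Finset V)} := ⟨⟨(), Finset.mem_univ v⟩⟩
    exact SimpleGraph.Connected.mk (fun a b => by rw [Subsingleton.elim a b])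
  edge_in_bag u _ v _ _ := ⟨(), Finset.mem_univ u, Finset.mem_univ v⟩

lemma exists_good_decomp (k : ℕ) (G : SimpleGraph V) (htw : treewidth G < k) :
    ∃ D : RTD V G, ∀ t, (D.bag t).card ≤ k := by
  have hne : {w : ℕ | ∃ D : RTD V G, D.widthLe w}.Nonempty := by
    refine ⟨Fintype.card V, trivRTD V G, fun t => ?_⟩
    show (Finset.univ : Finset V).card ≤ _
    rw [Finset.card_univ]; omega
  have hmem := Nat.sInf_mem hne
  obtain ⟨D, hD⟩ := hmem
  exact ⟨D, fun t => le_trans (hD t) (by have := htw; unfold treewidth at this; omega)⟩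

end GraphAux

lemma main_aux {V : Type} [Fintype V] [DecidableEq V] (k : ℕ) (G : SimpleGraph V)
    (D : RTD V G) (hk : ∀ t, (D.bag t).card ≤ k) (S : Finset V) :
    ∃ A B : Finset V, IsSeparation G A B ∧ (A ∩ B).card ≤ k ∧
      3 * ((A \ B) ∩ S).card ≤ 2 * S.card ∧
      3 * ((B \ A) ∩ S).card ≤ 2 * S.card := by
  classical
  rcases Nat.eq_zero_or_pos S.card with hS | hS
  · refine ⟨Finset.univ, ∅, ⟨by simp, by simp⟩, by simp, ?_, by simp⟩
    have h1 : ((Finset.univ \ ∅ : Finset V) ∩ S).card ≤ S.card :=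
      Finset.card_le_card Finset.inter_subset_right
    omega
  have hroot : D.parent D.root = D.root := D.parent_root
  have hreach : ∀ t, ∃ n, D.parent^[n] t = D.root := D.reaches_root
  -- the finset version of gamma
  set Γ : D.ι → Finset V := fun c => Finset.univ.filter (fun v => v ∈ D.gammaSet c) with hΓdef
  have memΓ : ∀ (v : V) (c : D.ι),
      v ∈ Γ c ↔ ∃ s, (∃ n, D.parent^[n] s = c) ∧ v ∈ D.bag s := by
    intro v c
    simp only [hΓdef]
    rw [Finset.mem_filter]
    exact ⟨fun h => h.2, fun h => ⟨Finset.mem_univ _, h⟩⟩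
  have hΓmono : ∀ {c t : D.ι}, D.parent c = t → Γ c ⊆ Γ t := by
    intro c t hc v hv
    rw [memΓ] at hv ⊢
    obtain ⟨s, ⟨n, hn⟩, hvs⟩ := hv
    exact ⟨s, ⟨n + 1, by rw [Function.iterate_succ_apply', hn, hc]⟩, hvs⟩
  have hbagΓ : ∀ c, D.bag c ⊆ Γ c := fun c v hv => (memΓ v c).2 ⟨c, ⟨0, rfl⟩, hv⟩
  have hΓr : ∀ v : V, v ∈ Γ D.root := by
    intro v
    obtain ⟨s, hs⟩ := exists_bag D v
    exact (memΓ v D.root).2 ⟨s, hreach s, hs⟩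
  -- the heavy nodes
  set H : Finset D.ι := Finset.univ.filter (fun c => 2 * S.card < 3 * (Γ c ∩ S).card)
    with hHdef
  have hrH : D.root ∈ H := by
    have h1 : Γ D.root ∩ S = S := Finset.inter_eq_right.2 (fun v hv => hΓr v)
    simp only [hHdef, Finset.mem_filter, Finset.mem_univ, true_and, h1]
    omega
  -- pick a deepest heavy node t
  obtain ⟨t, htH, htmax⟩ := H.exists_max_image (fun c => Nat.find (hreach c)) ⟨D.root, hrH⟩
  have hheavy : 2 * S.card < 3 * (Γ t ∩ S).card := by
    have := (Finset.mem_filter.1 htH).2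
    exact this
  have hdepth_lt : ∀ c : D.ι, D.parent c = t → c ≠ t →
      Nat.find (hreach t) < Nat.find (hreach c) := by
    intro c hpc hct
    have hn := Nat.find_spec (hreach c)
    have hn0 : Nat.find (hreach c) ≠ 0 := by
      intro h0
      rw [h0, Function.iterate_zero_apply] at hn
      apply hct
      rw [hn, ← hpc, hn, hroot]
    obtain ⟨m, hm⟩ : ∃ m, Nat.find (hreach c) = m + 1 := ⟨_, (Nat.succ_pred_eq_of_ne_zero hn0).symm⟩
    have hmt : D.parent^[m] t = D.root := by
      have h2 : D.parent^[m + 1] c = D.root := by rw [← hm]; exact hn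
      rw [Function.iterate_succ_apply, hpc] at h2
      exact h2
    have := Nat.find_min' (hreach t) hmt
    omega
  -- children of t
  set C : Finset D.ι := Finset.univ.filter (fun c => D.parent c = t ∧ c ≠ t) with hCdef
  have hmemC : ∀ c, c ∈ C ↔ D.parent c = t ∧ c ≠ t := by
    intro c; simp [hCdef]
  have hlight : ∀ c ∈ C, 3 * (Γ c ∩ S).card ≤ 2 * S.card := by
    intro c hc
    by_contra hcon
    have hcH : c ∈ H := by
      simp only [hHdef, Finset.mem_filter, Finset.mem_univ, true_and]
      omega
    have h1 := htmax c hcH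
    have h2 := hdepth_lt c ((hmemC c).1 hc).1 ((hmemC c).1 hc).2
    omega
  -- the pieces
  set Z : Option D.ι → Finset V := fun i => match i with
    | none => Finset.univ \ Γ t
    | some c => Γ c \ D.bag t
    with hZdef
  set I : Finset (Option D.ι) := insert none (C.image some) with hIdef
  have hmemI : ∀ c, some c ∈ I ↔ c ∈ C := by intro c; simp [hIdef]
  have hnoneI : none ∈ I := by simp [hIdef]
  -- pieces cover everything outside bag t
  have hcover : ∀ v : V, v ∉ D.bag t → ∃ i ∈ I, v ∈ Z i := by
    intro v hv
    by_cases hvt : v ∈ Γ t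
    · obtain ⟨s, hsub, hvs⟩ := (memΓ v t).1 hvt
      have hms := Nat.find_spec hsub
      have hm0 : Nat.find hsub ≠ 0 := by
        intro h0
        rw [h0, Function.iterate_zero_apply] at hms
        exact hv (hms ▸ hvs)
      obtain ⟨m', hm'⟩ : ∃ m', Nat.find hsub = m' + 1 :=
        ⟨_, (Nat.succ_pred_eq_of_ne_zero hm0).symm⟩
      have hpc : D.parent (D.parent^[m'] s) = t := by
        have h := hms
        rw [hm', Function.iterate_succ_apply'] at h
        exact h
      have hct : D.parent^[m'] s ≠ t := by
        intro h
        exact Nat.find_min hsub (by omega) h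
      refine ⟨some (D.parent^[m'] s), (hmemI _).2 ((hmemC _).2 ⟨hpc, hct⟩), ?_⟩
      simp only [hZdef, Finset.mem_sdiff]
      exact ⟨(memΓ v _).2 ⟨s, ⟨m', rfl⟩, hvs⟩, hv⟩
    · exact ⟨none, hnoneI, by simp [hZdef, hvt]⟩
  -- pieces are disjoint from bag t
  have hZbag : ∀ i, Disjoint (Z i) (D.bag t) := by
    intro i
    match i with
    | none =>
      exact Finset.disjoint_left.2
        (fun v hv hvb => (Finset.mem_sdiff.1 hv).2 (hbagΓ t hvb))
    | some c => exact Finset.sdiff_disjoint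
  -- two different children subtrees only meet in bag t
  have hΓcc : ∀ c ∈ C, ∀ c' ∈ C, c ≠ c' → ∀ v : V, v ∈ Γ c → v ∈ Γ c' → v ∈ D.bag t := by
    intro c hc c' hc' hne v h1 h2
    obtain ⟨hcp, hcn⟩ := (hmemC c).1 hc
    obtain ⟨hcp', hcn'⟩ := (hmemC c').1 hc'
    obtain ⟨s, hsubc, hvs⟩ := (memΓ v c).1 h1
    obtain ⟨s', hsubc', hvs'⟩ := (memΓ v c').1 h2
    by_cases hss : ∃ n, D.parent^[n] s' = c
    · exact absurd (child_unique hroot hreach hcp hcn hcp' hcn' hss hsubc') hne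
    · have hkey := key_lemma D hvs hsubc hvs' hss
      rw [hcp] at hkey
      exact hkey.2
  -- pieces are pairwise disjoint
  have hZdisj : ∀ i ∈ I, ∀ j ∈ I, i ≠ j → Disjoint (Z i) (Z j) := by
    have hns : ∀ c ∈ C, Disjoint (Z none) (Z (some c)) := by
      intro c hc
      refine Finset.disjoint_left.2 (fun v hv hv' => ?_)
      simp only [hZdef, Finset.mem_sdiff] at hv hv'
      exact hv.2 (hΓmono ((hmemC c).1 hc).1 hv'.1)
    intro i hi j hj hne
    match i, j with
    | none, none => exact absurd rfl hne
    | none, some c => exact hns c ((hmemI c).1 hj)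
    | some c, none => exact (hns c ((hmemI c).1 hi)).symm
    | some c, some c' =>
      refine Finset.disjoint_left.2 (fun v hv hv' => ?_)
      simp only [hZdef, Finset.mem_sdiff] at hv hv'
      exact hv.2 (hΓcc c ((hmemI c).1 hi) c' ((hmemI c').1 hj)
        (fun h => hne (by rw [h])) v hv.1 hv'.1)
  -- edges from a child piece stay within the child subtree
  have hedgeΓ : ∀ c ∈ C, ∀ u w : V, u ∈ Z (some c) → G.Adj u w → w ∈ Γ c := by
    intro c hc u w hu hadj
    obtain ⟨s, hus, hws⟩ := D.edge_in_bag u (Finset.mem_univ u) w (Finset.mem_univ w) hadj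
    by_cases hss : ∃ n, D.parent^[n] s = c
    · exact (memΓ w c).2 ⟨s, hss, hws⟩
    · exfalso
      simp only [hZdef, Finset.mem_sdiff] at hu
      obtain ⟨s0, hsub0, hu0⟩ := (memΓ u c).1 hu.1
      have hkey := key_lemma D hu0 hsub0 hus hss
      rw [((hmemC c).1 hc).1] at hkey
      exact hu.2 hkey.2
  -- no edges between distinct pieces
  have hZedge : ∀ i ∈ I, ∀ j ∈ I, i ≠ j → ∀ u ∈ Z i, ∀ w ∈ Z j, ¬ G.Adj u w := by
    have hkey : ∀ c ∈ C, ∀ j ∈ I, some c ≠ j → ∀ u ∈ Z (some c), ∀ w ∈ Z j, ¬ G.Adj u w := by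
      intro c hc j hj hne u hu w hw hadj
      have hwΓ : w ∈ Γ c := hedgeΓ c hc u w hu hadj
      match j with
      | none =>
        simp only [hZdef, Finset.mem_sdiff] at hw
        exact hw.2 (hΓmono ((hmemC c).1 hc).1 hwΓ)
      | some c' =>
        simp only [hZdef, Finset.mem_sdiff] at hw
        exact hw.2 (hΓcc c hc c' ((hmemI c').1 hj)
          (fun h => hne (by rw [h])) w hwΓ hw.1)
    intro i hi j hj hne u hu w hw hadj
    match i with
    | some c => exact hkey c ((hmemI c).1 hi) j hj hne u hu w hw hadj
    | none =>
      match j with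
      | none => exact hne rfl
      | some c' =>
        exact hkey c' ((hmemI c').1 hj) none hi (by simp) w hw u hu hadj.symm
  -- weights
  set wt : Option D.ι → ℕ := fun i => (Z i ∩ S).card with hwtdef
  have hwt_le : ∀ i ∈ I, 3 * wt i ≤ 2 * S.card := by
    intro i hi
    match i with
    | none =>
      have h1 : Z none ∩ S = S \ Γ t := by
        ext v
        simp only [hZdef, Finset.mem_sdiff, Finset.mem_inter, Finset.mem_univ, true_and]
        tauto
      have h2 := Finset.card_inter_add_card_sdiff S (Γ t)
      have h3 : (Γ t ∩ S).card = (S ∩ Γ t).card := by rw [Finset.inter_comm]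
      simp only [hwtdef, h1]
      omega
    | some c =>
      have h1 : Z (some c) ∩ S ⊆ Γ c ∩ S :=
        Finset.inter_subset_inter Finset.sdiff_subset subset_rfl
      have h2 := Finset.card_le_card h1
      have h3 := hlight c ((hmemI c).1 hi)
      simp only [hwtdef]
      omega
  have htotal : ∑ i ∈ I, wt i ≤ S.card := by
    rw [← Finset.card_biUnion (fun i hi j hj hne =>
      Finset.disjoint_left.2 (fun v hv hv' =>
        Finset.disjoint_left.1 (hZdisj i hi j hj hne) (Finset.mem_inter.1 hv).1
          (Finset.mem_inter.1 hv').1))]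
    exact Finset.card_le_card (fun v hv => by
      obtain ⟨i, _, hvi⟩ := Finset.mem_biUnion.1 hv
      exact (Finset.mem_inter.1 hvi).2)
  -- greedy choice of F
  have hfeas : (I.powerset.filter (fun F => 3 * ∑ i ∈ F, wt i ≤ 2 * S.card)).Nonempty := by
    refine ⟨∅, ?_⟩
    simp
  obtain ⟨F, hFmem, hFmax⟩ := Finset.exists_max_image _ (fun F => ∑ i ∈ F, wt i) hfeas
  have hFsub : F ⊆ I := Finset.mem_powerset.1 (Finset.mem_filter.1 hFmem).1
  have hFle : 3 * ∑ i ∈ F, wt i ≤ 2 * S.card := (Finset.mem_filter.1 hFmem).2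
  have hsplit : ∑ i ∈ I \ F, wt i + ∑ i ∈ F, wt i = ∑ i ∈ I, wt i := Finset.sum_sdiff hFsub
  have hother : 3 * ∑ i ∈ I \ F, wt i ≤ 2 * S.card := by
    by_contra hbig
    push_neg at hbig
    have hFsmall : 3 * ∑ i ∈ F, wt i ≤ S.card - 1 := by omega
    have hsumne : ∑ i ∈ I \ F, wt i ≠ 0 := by omega
    obtain ⟨c, hcIF, hc0⟩ := Finset.exists_ne_zero_of_sum_ne_zero hsumne
    have hcI : c ∈ I := (Finset.mem_sdiff.1 hcIF).1
    have hcF : c ∉ F := (Finset.mem_sdiff.1 hcIF).2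
    by_cases hcase : 3 * (∑ i ∈ F, wt i + wt c) ≤ 2 * S.card
    · have hmem' : insert c F ∈ I.powerset.filter (fun F => 3 * ∑ i ∈ F, wt i ≤ 2 * S.card) := by
        rw [Finset.mem_filter, Finset.mem_powerset]
        constructor
        · exact Finset.insert_subset hcI hFsub
        · rw [Finset.sum_insert hcF]; omega
      have := hFmax _ hmem'
      rw [Finset.sum_insert hcF] at this
      omega
    · have hwc : S.card + 1 < 3 * wt c := by omega
      have hmem' : {c} ∈ I.powerset.filter (fun F => 3 * ∑ i ∈ F, wt i ≤ 2 * S.card) := by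
        rw [Finset.mem_filter, Finset.mem_powerset]
        constructor
        · exact Finset.singleton_subset_iff.2 hcI
        · rw [Finset.sum_singleton]; exact hwt_le c hcI
      have := hFmax _ hmem'
      rw [Finset.sum_singleton] at this
      omega
  -- the separation
  set U : Finset V := F.biUnion Z with hUdef
  have hbagU : Disjoint (D.bag t) U := by
    rw [hUdef, Finset.disjoint_biUnion_right]
    exact fun i _ => (hZbag i).symm
  refine ⟨D.bag t ∪ U, Finset.univ \ U, ⟨?_, ?_⟩, ?_, ?_, ?_⟩
  · ext v
    simp only [Finset.mem_union, Finset.mem_sdiff, Finset.mem_univ, true_and]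
    tauto
  · intro a ha ha' b hb hb' hadj
    have haU : a ∈ U := by
      simp only [Finset.mem_sdiff, Finset.mem_univ, true_and, not_not] at ha'
      exact ha'
    have hbbag : b ∉ D.bag t := fun h => hb' (Finset.mem_union_left _ h)
    have hbU : b ∉ U := fun h => hb' (Finset.mem_union_right _ h)
    obtain ⟨i, hiF, hai⟩ := Finset.mem_biUnion.1 haU
    obtain ⟨j, hjI, hbj⟩ := hcover b hbbag
    have hjF : j ∉ F := fun h => hbU (Finset.mem_biUnion.2 ⟨j, h, hbj⟩)
    exact hZedge i (hFsub hiF) j hjI (fun h => hjF (h ▸ hiF)) a hai b hbj hadj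
  · have h1 : (D.bag t ∪ U) ∩ (Finset.univ \ U) = D.bag t := by
      ext v
      simp only [Finset.mem_inter, Finset.mem_union, Finset.mem_sdiff, Finset.mem_univ, true_and]
      constructor
      · rintro ⟨h1 | h1, h2⟩
        · exact h1
        · exact absurd h1 h2
      · intro h
        exact ⟨Or.inl h, Finset.disjoint_left.1 hbagU h⟩
    rw [h1]
    exact hk t
  · have h1 : (D.bag t ∪ U) \ (Finset.univ \ U) = U := by
      ext v
      simp only [Finset.mem_sdiff, Finset.mem_union, Finset.mem_univ, true_and, not_not]
      constructor
      · rintro ⟨_, h⟩; exact h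
      · intro h; exact ⟨Or.inr h, h⟩
    have h2 : U ∩ S = F.biUnion (fun i => Z i ∩ S) := by
      ext v
      simp only [hUdef, Finset.mem_inter, Finset.mem_biUnion]
      tauto
    have h3 : (F.biUnion (fun i => Z i ∩ S)).card = ∑ i ∈ F, wt i := by
      refine Finset.card_biUnion ?_
      intro i hi j hj hne
      exact Finset.disjoint_left.2 (fun v hv hv' =>
        Finset.disjoint_left.1 (hZdisj i (hFsub hi) j (hFsub hj) hne)
          (Finset.mem_inter.1 hv).1 (Finset.mem_inter.1 hv').1)
    rw [h1, h2, h3]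
    exact hFle
  · have h1 : (Finset.univ \ U) \ (D.bag t ∪ U) ∩ S ⊆ (I \ F).biUnion (fun i => Z i ∩ S) := by
      intro v hv
      simp only [Finset.mem_inter, Finset.mem_sdiff, Finset.mem_univ, true_and,
        Finset.mem_union, not_or] at hv
      obtain ⟨⟨hvU, hvbag, _⟩, hvS⟩ := hv
      obtain ⟨j, hjI, hvj⟩ := hcover v hvbag
      have hjF : j ∉ F := fun h => hvU (Finset.mem_biUnion.2 ⟨j, h, hvj⟩)
      exact Finset.mem_biUnion.2 ⟨j, Finset.mem_sdiff.2 ⟨hjI, hjF⟩, Finset.mem_inter.2 ⟨hvj, hvS⟩⟩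
    have h2 : ((I \ F).biUnion (fun i => Z i ∩ S)).card = ∑ i ∈ I \ F, wt i := by
      refine Finset.card_biUnion ?_
      intro i hi j hj hne
      exact Finset.disjoint_left.2 (fun v hv hv' =>
        Finset.disjoint_left.1
          (hZdisj i (Finset.mem_sdiff.1 hi).1 j (Finset.mem_sdiff.1 hj).1 hne)
          (Finset.mem_inter.1 hv).1 (Finset.mem_inter.1 hv').1)
    have h3 := Finset.card_le_card h1
    rw [h2] at h3
    omega

/-- Every graph of treewidth `< k` has, for any vertex set `S`, a
separation of order at most `k` that is `2/3`-balanced for `S`. -/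
theorem stmt16 {V : Type} [Fintype V] [DecidableEq V] (k : ℕ)
    (G : SimpleGraph V) (htw : treewidth G < k) (S : Finset V) :
    ∃ A B : Finset V, IsSeparation G A B ∧ (A ∩ B).card ≤ k ∧
      3 * ((A \ B) ∩ S).card ≤ 2 * S.card ∧
      3 * ((B \ A) ∩ S).card ≤ 2 * S.card := by
  obtain ⟨D, hD⟩ := exists_good_decomp k G htw
  exact main_aux k G D hD S
end
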